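/- arXiv:1403.1980 — 3 statements merged into one kernel-verified Lean document; each statement's English description precedes it below -/
import Mathlib

section
/- Fix $\varepsilon > 0$, $g : \mathbb{R}^d \to \mathbb{R}$ bounded, and $\tau \in \mathbb{R}^d$ a $\delta$-almost period of $g$ (i.e., $\sup_x |g(x+\tau) - g(x)| < \delta$). Let $\mathcal{I}$ be a translation-invariant operator ($\mathcal{I}(\phi(\cdot + \tau))(x) = \mathcal{I}(\phi)(x + \tau)$) satisfying the hypotheses (a) $\mathcal{I}(\phi + c) = \mathcal{I}(\phi) - \varepsilon c$ for constants $c$ and (b) the comparison principle. If $w$ solves $\mathcal{I}(w)(y) = g(y)$ for all $y$, then $\sup_y |w(y + \tau) - w(y)| \le \varepsilon^{-1} \delta$; i.e., $\tau$ is a $\delta$-almost period of $\varepsilon w$. -/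
/-- almost periods transfer from the data to the solution. If `τ`
is a `δ`-almost period of `g`, `𝓘` is translation invariant, satisfies
`𝓘(φ + c) = 𝓘(φ) - ε c` and the comparison principle, and `𝓘(w) = g`, then
`sup_y |w(y + τ) - w(y)| ≤ ε⁻¹ δ`, i.e. `τ` is a `δ`-almost period of `ε w`. -/
theorem almost_period_of_data_is_almost_period_of_solution
    (d : ℕ) (ε δ : ℝ) (hε : 0 < ε) (hδ : 0 < δ)
    (g : EuclideanSpace ℝ (Fin d) → ℝ) (hgb : ∃ M, ∀ x, |g x| ≤ M)
    (τ : EuclideanSpace ℝ (Fin d))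
    (hτ : ∀ x, |g (x + τ) - g x| < δ)
    (I : (EuclideanSpace ℝ (Fin d) → ℝ) → (EuclideanSpace ℝ (Fin d) → ℝ))
    (htrans : ∀ (φ : EuclideanSpace ℝ (Fin d) → ℝ) (z x : EuclideanSpace ℝ (Fin d)),
      I (fun y => φ (y + z)) x = I φ (x + z))
    (hconst : ∀ (φ : EuclideanSpace ℝ (Fin d) → ℝ) (c : ℝ) (y : EuclideanSpace ℝ (Fin d)),
      I (fun x => φ x + c) y = I φ y - ε * c)
    (hcomp : ∀ u v : EuclideanSpace ℝ (Fin d) → ℝ,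
      (∀ x, I v x ≤ I u x) → ∀ x, u x ≤ v x)
    (w : EuclideanSpace ℝ (Fin d) → ℝ) (hwb : ∃ M, ∀ x, |w x| ≤ M)
    (hw : ∀ y, I w y = g y) :
    ∀ y, |w (y + τ) - w y| ≤ ε⁻¹ * δ := by
  intro y
  have h1 : ∀ x, w (x + τ) ≤ w x + ε⁻¹ * δ := by
    apply hcomp (fun x => w (x + τ)) (fun x => w x + ε⁻¹ * δ)
    intro x
    have hv : I (fun x => w x + ε⁻¹ * δ) x = g x - δ := by
      rw [hconst, hw]
      field_simp
    have hu : I (fun x => w (x + τ)) x = g (x + τ) := by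
      rw [htrans, hw]
    rw [hv, hu]
    have := abs_lt.mp (hτ x)
    linarith [this.1]
  have h2 : ∀ x, w x ≤ w (x + τ) + ε⁻¹ * δ := by
    apply hcomp w (fun x => w (x + τ) + ε⁻¹ * δ)
    intro x
    have hv : I (fun x => w (x + τ) + ε⁻¹ * δ) x = g (x + τ) - δ := by
      rw [hconst, htrans, hw]
      field_simp
    rw [hv, hw]
    have := abs_lt.mp (hτ x)
    linarith [this.2]
  rw [abs_le]
  constructor <;> [linarith [h2 y]; linarith [h1 y]]
end

section
/- Let $(w_\varepsilon)_{\varepsilon > 0}$ be a family of functions on $\mathbb{R}^d$ and suppose: (i) for every $\delta > 0$ there is $R_\delta > 0$ such that for every $z \in \mathbb{R}^d$ there exists $\tau$ with $z - \tau \in B_{R_\delta}(0)$ and $\sup_y |\varepsilon w_\varepsilon(y + \tau) - \varepsilon w_\varepsilon(y)| \le \delta$ for all $\varepsilon$; (ii) for every fixed $R > 0$, the oscillation of $y \mapsto \varepsilon w_\varepsilon(y)$ over $B_R(0)$ tends to $0$ as $\varepsilon \to 0^+$. Then $\sup_y |\varepsilon w_\varepsilon(y) - \varepsilon w_\varepsilon(0)|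 \to 0$ as $\varepsilon \to 0^+$. -/
open Metric

/-- abstract form of the Ishii-type flattening lemma: if the
rescaled family `ε w_ε` has relatively dense common almost periods (i), and its
oscillation on each fixed ball vanishes as `ε → 0⁺` (ii), then
`sup_y |ε w_ε(y) - ε w_ε(0)| → 0` as `ε → 0⁺`. -/
theorem flattening_from_almost_periods_and_vanishing_oscillation
    (d : ℕ) (w : ℝ → EuclideanSpace ℝ (Fin d) → ℝ)
    (h_ap : ∀ δ > (0:ℝ), ∃ Rδ > (0:ℝ), ∀ z : EuclideanSpace ℝ (Fin d),
      ∃ τ : EuclideanSpace ℝ (Fin d), z - τ ∈ ball (0 : EuclideanSpace ℝ (Fin d)) Rδ ∧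
        ∀ ε > (0:ℝ), ∀ y, |ε * w ε (y + τ) - ε * w ε y| ≤ δ)
    (h_osc : ∀ R > (0:ℝ), ∀ δ > (0:ℝ), ∃ ε₀ > (0:ℝ), ∀ ε, 0 < ε → ε < ε₀ →
      ∀ y y' : EuclideanSpace ℝ (Fin d), y ∈ ball 0 R → y' ∈ ball 0 R →
        |ε * w ε y - ε * w ε y'| ≤ δ) :
    ∀ δ > (0:ℝ), ∃ ε₀ > (0:ℝ), ∀ ε, 0 < ε → ε < ε₀ →
      ∀ y, |ε * w ε y - ε * w ε 0| ≤ δ := by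
  intro δ hδ
  obtain ⟨R, hR, hap⟩ := h_ap (δ/2) (by linarith)
  obtain ⟨ε₀, hε₀, hosc⟩ := h_osc R hR (δ/2) (by linarith)
  refine ⟨ε₀, hε₀, fun ε hε hε' y => ?_⟩
  obtain ⟨τ, hmem, hτ⟩ := hap y
  have h1 : |ε * w ε ((y - τ) + τ) - ε * w ε (y - τ)| ≤ δ/2 := hτ ε hε (y - τ)
  have h2 : |ε * w ε (y - τ) - ε * w ε 0| ≤ δ/2 :=
    hosc ε hε hε' (y - τ) 0 hmem (mem_ball_self hR)
  have hy : (y - τ) + τ = y := by abel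
  rw [hy] at h1
  calc |ε * w ε y - ε * w ε 0|
      ≤ |ε * w ε y - ε * w ε (y - τ)| + |ε * w ε (y - τ) - ε * w ε 0| := abs_sub_le _ _ _
    _ ≤ δ/2 + δ/2 := add_le_add h1 h2
    _ = δ := by ring
end

section
/- Let $r \ge 1$, $\delta > 0$, and suppose the operator $\mathcal{I}^r$ satisfies: (a) $\mathcal{I}^r(\phi + c)(x) = \mathcal{I}^r(\phi)(x) - r^{-1} c$ for constants $c$; (b) degenerate ellipticity: if $u \le w$ on $\mathbb{R}^d$ with $u(x_0) = w(x_0)$ then $\mathcal{I}^r(u)(x_0) \le \mathcal{I}^r(w)(x_0)$; (c) the extremal bound $\mathcal{I}^r(v + \psi)(x) - \mathcal{I}^r(v)(x) \le M^{r,+}(\psi)(x)$ for all suitable $v, \psi$, where $M^{r,+}$ is positively 1-homogeneous and satisfies $\|M^{r,+}(\phi_R)\|_\infty \le C R^{-1}$ for all $R \ge 1/2$. If $u, v$ are bounded with $\mathcal{I}^r(u)(x) \ge \mathcal{I}^r(v)(x)$ for all $x$, and all quantities are classically defined, then $u \le v$ on $\mathbb{R}^d$. -/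
/-- The rescaled localization function `φ_R(x) = |x/R|² / (1 + |x/R|²)`. -/
noncomputable def phiR {d : ℕ} (R : ℝ) (x : EuclideanSpace ℝ (Fin d)) : ℝ :=
  ‖R⁻¹ • x‖ ^ 2 / (1 + ‖R⁻¹ • x‖ ^ 2)

lemma phiR_cont {d : ℕ} (R : ℝ) : Continuous (phiR (d := d) R) := by
  unfold phiR
  apply Continuous.div
  · fun_prop
  · fun_prop
  · intro x; positivity

lemma phiR_le_one {d : ℕ} (R : ℝ) (x : EuclideanSpace ℝ (Fin d)) : phiR R x ≤ 1 := by
  unfold phiR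
  rw [div_le_one (by positivity)]
  nlinarith [sq_nonneg ‖R⁻¹ • x‖]

lemma norm_inv_smul {d : ℕ} (R : ℝ) (hR : 0 < R) (x : EuclideanSpace ℝ (Fin d)) :
    ‖R⁻¹ • x‖ = R⁻¹ * ‖x‖ := by
  rw [norm_smul, Real.norm_eq_abs, abs_of_pos (inv_pos.2 hR)]

lemma phiR_half {d : ℕ} (R : ℝ) (hR : 0 < R) (x : EuclideanSpace ℝ (Fin d))
    (hx : R ≤ ‖x‖) : 1/2 ≤ phiR R x := by
  have ht : (1:ℝ) ≤ ‖R⁻¹ • x‖ := by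
    rw [norm_inv_smul R hR]
    calc (1:ℝ) = R⁻¹ * R := (inv_mul_cancel₀ hR.ne').symm
    _ ≤ R⁻¹ * ‖x‖ := mul_le_mul_of_nonneg_left hx (inv_pos.2 hR).le
  unfold phiR
  rw [le_div_iff₀ (by positivity)]
  nlinarith

lemma phiR_small {d : ℕ} (R : ℝ) (hR : 0 < R) (x : EuclideanSpace ℝ (Fin d))
    (hx : ‖x‖ ≤ R / 4) : phiR R x ≤ 1/8 := by
  have ht : ‖R⁻¹ • x‖ ≤ 1/4 := by
    rw [norm_inv_smul R hR, inv_mul_le_iff₀ hR]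
    linarith
  have h0 : (0:ℝ) ≤ ‖R⁻¹ • x‖ := norm_nonneg _
  unfold phiR
  calc ‖R⁻¹ • x‖ ^ 2 / (1 + ‖R⁻¹ • x‖ ^ 2) ≤ ‖R⁻¹ • x‖ ^ 2 :=
        div_le_self (by positivity) (by nlinarith)
  _ ≤ 1/8 := by nlinarith

/-- comparison principle for smooth functions, abstract form:
if `𝓘^r` satisfies (a) the constants rule, (b) degenerate ellipticity (monotone
under touching), and (c) the extremal bound by a positively 1-homogeneous `M⁺`
with `‖M⁺(φ_R)‖_∞ ≤ C R⁻¹` for `R ≥ 1/2`, then `𝓘^r(u) ≥ 𝓘^r(v)` pointwise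
implies `u ≤ v` for bounded `u, v`. -/
theorem comparison_principle_for_smooth_functions
    (d : ℕ) (r : ℝ) (hr : 1 ≤ r)
    (I : (EuclideanSpace ℝ (Fin d) → ℝ) → (EuclideanSpace ℝ (Fin d) → ℝ))
    (Mplus : (EuclideanSpace ℝ (Fin d) → ℝ) → (EuclideanSpace ℝ (Fin d) → ℝ))
    (hconst : ∀ (φ : EuclideanSpace ℝ (Fin d) → ℝ) (c : ℝ) (x : EuclideanSpace ℝ (Fin d)),
      I (fun y => φ y + c) x = I φ x - r⁻¹ * c)
    (hell : ∀ u w : EuclideanSpace ℝ (Fin d) → ℝ, ∀ x₀,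
      (∀ x, u x ≤ w x) → u x₀ = w x₀ → I u x₀ ≤ I w x₀)
    (hext : ∀ v ψ : EuclideanSpace ℝ (Fin d) → ℝ, ∀ x,
      I (fun y => v y + ψ y) x - I v x ≤ Mplus ψ x)
    (hhom : ∀ (c : ℝ), 0 < c → ∀ (φ : EuclideanSpace ℝ (Fin d) → ℝ) (x : EuclideanSpace ℝ (Fin d)),
      Mplus (fun y => c * φ y) x = c * Mplus φ x)
    (C : ℝ) (hC : 0 < C)
    (hMphi : ∀ R : ℝ, 1/2 ≤ R → ∀ x, |Mplus (phiR R) x| ≤ C * R⁻¹)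
    (u v : EuclideanSpace ℝ (Fin d) → ℝ)
    (hu : Continuous u) (hv : Continuous v)
    (hub : ∃ M, ∀ x, |u x| ≤ M) (hvb : ∃ M, ∀ x, |v x| ≤ M)
    (hIuv : ∀ x, I v x ≤ I u x) :
    ∀ x, u x ≤ v x := by
  by_contra h
  push_neg at h
  obtain ⟨x₀, hx₀⟩ := h
  obtain ⟨Mu, hMu⟩ := hub
  obtain ⟨Mv, hMv⟩ := hvb
  set f : EuclideanSpace ℝ (Fin d) → ℝ := fun x => u x - v x with hf
  have hbdd : BddAbove (Set.range f) := by
    refine ⟨Mu + Mv, ?_⟩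
    rintro y ⟨x, rfl⟩
    have := abs_le.1 (hMu x); have := abs_le.1 (hMv x)
    simp only [hf]; linarith
  set δ := sSup (Set.range f) with hδ
  have hδpos : 0 < δ :=
    lt_of_lt_of_le (by simpa [hf] using sub_pos.2 hx₀) (le_csSup hbdd ⟨x₀, rfl⟩)
  have hfle : ∀ x, f x ≤ δ := fun x => le_csSup hbdd ⟨x, rfl⟩
  obtain ⟨y, ⟨x₁, rfl⟩, hx₁⟩ :=
    exists_lt_of_lt_csSup (Set.range_nonempty f) (show 3*δ/4 < δ by linarith)
  set R : ℝ := max (max (1/2) (4*‖x₁‖)) (4*C*r + 1) with hR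
  have hR0 : 0 < R := lt_of_lt_of_le (by norm_num) (le_trans (le_max_left _ _) (le_max_left _ _))
  have hRhalf : 1/2 ≤ R := le_trans (le_max_left _ _) (le_max_left _ _)
  have hRx₁ : 4*‖x₁‖ ≤ R := le_trans (le_max_right _ _) (le_max_left _ _)
  have hRCr : 4*C*r + 1 ≤ R := le_max_right _ _
  set w : EuclideanSpace ℝ (Fin d) → ℝ := fun x => u x - v x - 2*δ*phiR R x with hw
  have hwcont : Continuous w := by
    apply Continuous.sub (hu.sub hv)
    exact continuous_const.mul (phiR_cont R)
  obtain ⟨z, hzmem, hzmax⟩ := (isCompact_closedBall (0 : EuclideanSpace ℝ (Fin d)) R).exists_isMaxOn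
    ⟨0, by simp [hR0.le]⟩ hwcont.continuousOn
  have hx₁mem : x₁ ∈ Metric.closedBall (0 : EuclideanSpace ℝ (Fin d)) R := by
    rw [Metric.mem_closedBall, dist_zero_right]
    have := norm_nonneg x₁; linarith
  have hwx₁ : δ/2 ≤ w x₁ := by
    have hs : phiR R x₁ ≤ 1/8 := phiR_small R hR0 x₁ (by linarith)
    have : 3*δ/4 < u x₁ - v x₁ := hx₁
    simp only [hw]; nlinarith
  have hwz : δ/2 ≤ w z := le_trans hwx₁ (hzmax hx₁mem)
  -- global maximum
  have hglob : ∀ x, w x ≤ w z := by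
    intro x
    by_cases hx : x ∈ Metric.closedBall (0 : EuclideanSpace ℝ (Fin d)) R
    · exact hzmax hx
    · rw [Metric.mem_closedBall, dist_zero_right, not_le] at hx
      have hhalf : 1/2 ≤ phiR R x := phiR_half R hR0 x hx.le
      have hfx := hfle x
      simp only [hf] at hfx
      simp only [hw]; nlinarith
  -- the operator chain at z
  have key1 : I u z ≤ I (fun y => (v y + 2*δ*phiR R y) + w z) z := by
    apply hell
    · intro x
      have := hglob x
      simp only [hw] at this ⊢; linarith
    · simp only [hw]; ring
  have key2 : I (fun y => (v y + 2*δ*phiR R y) + w z) z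
      = I (fun y => v y + 2*δ*phiR R y) z - r⁻¹ * w z :=
    hconst (fun y => v y + 2*δ*phiR R y) (w z) z
  have key3 : I (fun y => v y + 2*δ*phiR R y) z - I v z ≤ 2*δ * Mplus (phiR R) z := by
    have := hext v (fun y => 2*δ*phiR R y) z
    rwa [show (fun y => 2*δ*phiR R y) = (fun y => (2*δ) * phiR R y) from rfl,
      hhom (2*δ) (by linarith) (phiR R) z] at this
  have key4 : Mplus (phiR R) z ≤ C * R⁻¹ := (abs_le.1 (hMphi R hRhalf z)).2
  have hr0 : 0 < r := lt_of_lt_of_le one_pos hr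
  have hrw : r⁻¹ * (δ/2) ≤ r⁻¹ * w z :=
    mul_le_mul_of_nonneg_left hwz (inv_pos.2 hr0).le
  have hfin : r⁻¹ * (δ/2) ≤ 2*δ*(C * R⁻¹) := by
    have h1 := hIuv z
    nlinarith [key1, key2, key3, key4, hδpos]
  -- contradiction
  have h4Cr : 0 < 4*C*r := by positivity
  have hinv : R⁻¹ < (4*C*r)⁻¹ := by
    apply inv_strictAnti₀ h4Cr
    linarith
  have h5 : 2*δ*(C*R⁻¹) < 2*δ*(C*(4*C*r)⁻¹) :=
    mul_lt_mul_of_pos_left (mul_lt_mul_of_pos_left hinv hC) (by linarith)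
  have h6 : 2*δ*(C*(4*C*r)⁻¹) = r⁻¹*(δ/2) := by
    field_simp
    ring
  linarith [hfin, h5, h6]
end
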